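/- Let f : ℂ^(m×n) → ℂ be differentiable. Then f satisfies the homogeneity property f(UN) = (det N)^α · f(U) for all N ∈ ℂ^(n×n) if and only if f satisfies the system of partial differential equations Uᵀ (∂f/∂U) = α · I · f, where (Uᵀ ∂/∂U)_{ij} = Σ_{d=1}^m U_{di} ∂/∂U_{dj}. -/

import Mathlib

open scoped BigOperators
open Matrix

namespace Stmt0Aux

variable {m n : ℕ}

/-- multiply an `m × n` "function matrix" by a square matrix on the right -/
noncomputable def mm (U : Fin m → Fin n → ℂ) (N : Matrix (Fin n) (Fin n) ℂ) : Fin m → Fin n → ℂ :=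
  fun a b => ∑ c, U a c * N c b

lemma mm_one (U : Fin m → Fin n → ℂ) : mm U 1 = U := by
  funext a b; simp [mm, Matrix.one_apply]

lemma mm_assoc (U : Fin m → Fin n → ℂ) (N₁ N₂ : Matrix (Fin n) (Fin n) ℂ) :
    mm (mm U N₁) N₂ = mm U (N₁ * N₂) := by
  funext a b
  simp only [mm, Matrix.mul_apply, Finset.sum_mul, Finset.mul_sum]
  rw [Finset.sum_comm]
  congr 1; funext c; congr 1; funext c'; ring

lemma mm_add (U : Fin m → Fin n → ℂ) (N N' : Matrix (Fin n) (Fin n) ℂ) :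
    mm U (N + N') = mm U N + mm U N' := by
  funext a b; simp [mm, mul_add, Finset.sum_add_distrib]

lemma mm_addl (U V : Fin m → Fin n → ℂ) (N : Matrix (Fin n) (Fin n) ℂ) :
    mm (U + V) N = mm U N + mm V N := by
  funext a b; simp [mm, add_mul, Finset.sum_add_distrib]

lemma mm_smul (U : Fin m → Fin n → ℂ) (c : ℂ) (N : Matrix (Fin n) (Fin n) ℂ) :
    mm U (c • N) = c • mm U N := by
  funext a b; simp [mm, Finset.mul_sum]; congr 1; funext c'; ring

lemma mm_smull (U : Fin m → Fin n → ℂ) (c : ℂ) (N : Matrix (Fin n) (Fin n) ℂ) :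
    mm (c • U) N = c • mm U N := by
  funext a b; simp [mm, Finset.mul_sum, mul_assoc]

lemma mm_zero (U : Fin m → Fin n → ℂ) : mm U (0 : Matrix (Fin n) (Fin n) ℂ) = 0 := by
  funext a b; simp [mm]

lemma pi_decomp (v : Fin m → Fin n → ℂ) :
    v = ∑ d, ∑ j, v d j • (Pi.single d (Pi.single j 1) : Fin m → Fin n → ℂ) := by
  funext a b
  rw [Finset.sum_apply, Finset.sum_apply]
  simp [Pi.single_apply, apply_ite (fun g : Fin n → ℂ => g b), Finset.sum_apply,
    Finset.sum_ite_eq, eq_comm]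

lemma fderiv_apply_eq (f : (Fin m → Fin n → ℂ) → ℂ) (U v : Fin m → Fin n → ℂ) :
    fderiv ℂ f U v = ∑ d, ∑ j, v d j * fderiv ℂ f U (Pi.single d (Pi.single j 1)) := by
  conv_lhs => rw [pi_decomp v]
  rw [map_sum]
  simp [smul_eq_mul]

variable {α : ℕ} {f : (Fin m → Fin n → ℂ) → ℂ}

lemma key
    (hPDE : ∀ (U : Fin m → Fin n → ℂ) (i j : Fin n),
        (∑ d, U d i * fderiv ℂ f U (Pi.single d (Pi.single j 1))) =
          (α : ℂ) * (if i = j then 1 else 0) * f U)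
    (U : Fin m → Fin n → ℂ) (M : Matrix (Fin n) (Fin n) ℂ) :
    fderiv ℂ f U (mm U M) = (α : ℂ) * M.trace * f U := by
  rw [fderiv_apply_eq]
  have h0 : ∀ d j, (mm U M) d j = ∑ c, U d c * M c j := fun d j => rfl
  simp_rw [h0, Finset.sum_mul]
  rw [Finset.sum_comm]
  have h1 : ∀ j : Fin n, (∑ d, ∑ c, U d c * M c j * fderiv ℂ f U (Pi.single d (Pi.single j 1)))
      = M j j * ((α : ℂ) * f U) := by
    intro j
    rw [Finset.sum_comm]
    have h2 : ∀ c, (∑ d, U d c * M c j * fderiv ℂ f U (Pi.single d (Pi.single j 1)))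
        = M c j * ((α : ℂ) * (if c = j then 1 else 0) * f U) := by
      intro c
      rw [← hPDE U c j, Finset.mul_sum]
      congr 1; funext d; ring
    simp_rw [h2]
    simp [Finset.sum_ite_eq, mul_ite]
  simp_rw [h1]
  rw [← Finset.sum_mul, Matrix.trace]
  simp [Matrix.diag]
  ring

lemma path_hasDerivAt (hf : Differentiable ℂ f)
    (c : ℂ → ℂ) (c' : ℂ) (t : ℂ) (hc : HasDerivAt c c' t)
    (U W : Fin m → Fin n → ℂ) :
    HasDerivAt (fun s : ℂ => f (U + c s • W)) (c' * fderiv ℂ f (U + c t • W) W) t := by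
  have h1 : HasDerivAt (fun s : ℂ => U + c s • W) (c' • W) t := (hc.smul_const W).const_add U
  have h2 := (hf (U + c t • W)).hasFDerivAt.comp_hasDerivAt t h1
  simpa [smul_eq_mul, Function.comp_def] using h2


section
variable (hf : Differentiable ℂ f)
    (hPDE : ∀ (U : Fin m → Fin n → ℂ) (i j : Fin n),
        (∑ d, U d i * fderiv ℂ f U (Pi.single d (Pi.single j 1))) =
          (α : ℂ) * (if i = j then 1 else 0) * f U)
include hf hPDE

lemma P_trans (p q : Fin n) (hpq : p ≠ q) (c : ℂ) (U : Fin m → Fin n → ℂ) :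
    f (mm U (Matrix.transvection p q c)) = f U := by
  set E : Matrix (Fin n) (Fin n) ℂ := Matrix.single p q 1 with hE
  set W : Fin m → Fin n → ℂ := mm U E with hW
  have hEc : Matrix.single p q c = c • E := by
    rw [hE, Matrix.smul_single, smul_eq_mul, mul_one]
  have hMat : mm U (Matrix.transvection p q c) = U + c • W := by
    rw [Matrix.transvection, hEc, mm_add, mm_one, mm_smul, hW]
  have hEE : E * E = 0 := Matrix.single_mul_single_of_ne (c := (1:ℂ)) p q p hpq.symm 1
  have hderiv : ∀ t : ℂ, HasDerivAt (fun s : ℂ => f (U + s • W)) 0 t := by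
    intro t
    have h := path_hasDerivAt hf id 1 t (hasDerivAt_id t) U W
    have hVE : mm (U + t • W) E = W := by
      rw [mm_addl, mm_smull, hW, mm_assoc, hEE, mm_zero, smul_zero, add_zero]
    have hk := key hPDE (U + t • W) E
    rw [hVE] at hk
    have htr : E.trace = 0 := by
      simp only [Matrix.trace, Matrix.diag, hE]
      apply Finset.sum_eq_zero
      intro x _
      exact Matrix.single_apply_of_ne _ _ _ _ _ (by rintro ⟨rfl, rfl⟩; exact hpq rfl)
    rw [htr] at hk
    simp only [mul_zero, zero_mul] at hk
    simp only [id] at h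
    rw [hk] at h
    simpa using h
  have hg : f (U + c • W) = f (U + (0:ℂ) • W) :=
    is_const_of_deriv_eq_zero (fun t => (hderiv t).differentiableAt)
      (fun t => (hderiv t).deriv) c 0
  rw [hMat, hg]
  simp

lemma P_diag_single (k : Fin n) (z : ℂ) (hz : z ≠ 0) (U : Fin m → Fin n → ℂ) :
    f (mm U (1 + Matrix.single k k (z - 1))) = z ^ α * f U := by
  set E : Matrix (Fin n) (Fin n) ℂ := Matrix.single k k 1 with hE
  set W : Fin m → Fin n → ℂ := mm U E with hW
  set L : ℂ := Complex.log z with hL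
  have hEE : E * E = E := by
    rw [hE]
    simpa using Matrix.single_mul_single_same (c := (1:ℂ)) k k k 1
  have htr : E.trace = 1 := by
    simp [Matrix.trace, hE, Matrix.diag, Matrix.single, Finset.sum_ite_eq]
  set c : ℂ → ℂ := fun t => Complex.exp (t * L) - 1 with hc
  set g : ℂ → ℂ := fun t => f (U + c t • W) with hg
  have hcd : ∀ t : ℂ, HasDerivAt c (Complex.exp (t * L) * L) t := by
    intro t
    simpa [hc] using (((hasDerivAt_id t).mul_const L).cexp).sub_const 1
  have hgd : ∀ t : ℂ, HasDerivAt g ((α : ℂ) * L * g t) t := by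
    intro t
    have h := path_hasDerivAt hf c (Complex.exp (t * L) * L) t (hcd t) U W
    have hVE : mm (U + c t • W) E = Complex.exp (t * L) • W := by
      rw [mm_addl, mm_smull, hW, mm_assoc, hEE, ← hW]
      funext a b
      simp only [Pi.add_apply, Pi.smul_apply, smul_eq_mul, hc]
      ring
    have hk := key hPDE (U + c t • W) E
    rw [hVE, htr, _root_.map_smul, smul_eq_mul] at hk
    have hfW : Complex.exp (t * L) * fderiv ℂ f (U + c t • W) W
        = (α : ℂ) * f (U + c t • W) := by simpa using hk
    have hval : Complex.exp (t * L) * L * fderiv ℂ f (U + c t • W) W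
        = (α : ℂ) * L * f (U + c t • W) := by linear_combination L * hfW
    show HasDerivAt (fun s : ℂ => f (U + c s • W)) ((α : ℂ) * L * f (U + c t • W)) t
    rwa [hval] at h
  set F : ℂ → ℂ := fun t => g t * Complex.exp (-((α : ℂ) * L) * t) with hF
  have hFd : ∀ t : ℂ, HasDerivAt F 0 t := by
    intro t
    have h1 : HasDerivAt (fun s : ℂ => Complex.exp (-((α : ℂ) * L) * s))
        (Complex.exp (-((α : ℂ) * L) * t) * (-((α : ℂ) * L))) t := by
      simpa using ((hasDerivAt_id t).const_mul (-((α : ℂ) * L))).cexp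
    have h2 : HasDerivAt F _ t := (hgd t).mul h1
    convert h2 using 1
    ring
  have hcon : F 1 = F 0 :=
    is_const_of_deriv_eq_zero (fun t => (hFd t).differentiableAt)
      (fun t => (hFd t).deriv) 1 0
  have hF0 : F 0 = f U := by
    simp only [hF, hg, hc]; simp
  have hinv : Complex.exp ((α : ℂ) * L) = z ^ α := by
    rw [Complex.exp_nat_mul, hL, Complex.exp_log hz]
  have hzα : (z : ℂ) ^ α ≠ 0 := pow_ne_zero _ hz
  have hcon' : g 1 * (z ^ α)⁻¹ = f U := by
    have h5 : F 1 = f U := hcon.trans hF0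
    rw [hF] at h5
    simp only [mul_one] at h5
    rw [← hinv, ← Complex.exp_neg]
    exact h5
  have hgoal : g 1 = z ^ α * f U := by
    field_simp at hcon'
    linear_combination hcon'
  have hone : mm U (1 + Matrix.single k k (z - 1)) = U + c 1 • W := by
    have hEc : Matrix.single k k (z-1) = (z-1) • E := by
      rw [hE, Matrix.smul_single, smul_eq_mul, mul_one]
    rw [hEc, mm_add, mm_one, mm_smul, ← hW]
    congr 2
    rw [hc]; simp [hL, Complex.exp_log hz]
  rw [hone]
  rw [hg] at hgoal
  simpa using hgoal


/-- the homogeneity predicate for a single matrix `N` -/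
def Phom (α : ℕ) (f : (Fin m → Fin n → ℂ) → ℂ) (N : Matrix (Fin n) (Fin n) ℂ) : Prop :=
  ∀ U : Fin m → Fin n → ℂ, f (mm U N) = N.det ^ α * f U

omit hf hPDE in
lemma Phom_one : Phom α f (1 : Matrix (Fin n) (Fin n) ℂ) := by
  intro U; rw [mm_one]; simp

omit hf hPDE in
lemma Phom_mul {N₁ N₂ : Matrix (Fin n) (Fin n) ℂ} (h₁ : Phom α f N₁) (h₂ : Phom α f N₂) :
    Phom α f (N₁ * N₂) := by
  intro U
  rw [← mm_assoc, h₂, h₁, Matrix.det_mul, mul_pow]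
  ring

lemma Phom_transvection (p q : Fin n) (hpq : p ≠ q) (c : ℂ) :
    Phom α f (Matrix.transvection p q c) := by
  intro U
  rw [P_trans hf hPDE p q hpq c U, Matrix.det_transvection_of_ne p q hpq c]
  simp

omit hf hPDE in
lemma one_add_std_eq_diagonal (k : Fin n) (z : ℂ) :
    (1 + Matrix.single k k (z - 1) : Matrix (Fin n) (Fin n) ℂ)
      = Matrix.diagonal (Function.update (1 : Fin n → ℂ) k z) := by
  ext a b
  rcases eq_or_ne a b with rfl | hab
  · rcases eq_or_ne a k with rfl | hak
    · simp [Matrix.one_apply, Matrix.diagonal]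
    · simp [Matrix.one_apply, Matrix.diagonal, Function.update_apply, hak,
        Matrix.single_apply_of_ne k k (z-1) a a (by rintro ⟨rfl, -⟩; exact hak rfl)]
  · simp [Matrix.one_apply, hab, Matrix.diagonal, Function.update_apply,
      Matrix.single_apply_of_ne k k (z-1) a b (by rintro ⟨rfl, rfl⟩; exact hab rfl)]

lemma Phom_diag_factor (k : Fin n) (z : ℂ) (hz : z ≠ 0) :
    Phom α f (1 + Matrix.single k k (z - 1)) := by
  have hdet : (1 + Matrix.single k k (z - 1) : Matrix (Fin n) (Fin n) ℂ).det = z := by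
    rw [one_add_std_eq_diagonal, Matrix.det_diagonal,
      Finset.prod_update_of_mem (Finset.mem_univ k)]
    simp
  intro U
  rw [P_diag_single hf hPDE k z hz U, hdet]

lemma Phom_diagonal (D : Fin n → ℂ) (hD : ∀ k, D k ≠ 0) :
    Phom α f (Matrix.diagonal D) := by
  have haux : ∀ s : Finset (Fin n),
      Phom α f (Matrix.diagonal (fun i => if i ∈ s then D i else 1)) := by
    intro s
    induction s using Finset.induction with
    | empty => simpa [Matrix.diagonal_one] using Phom_one (α := α) (f := f) (m := m)
    | @insert k s hk ih =>
        have hstep : (Matrix.diagonal (fun i => if i ∈ insert k s then D i else 1)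
              : Matrix (Fin n) (Fin n) ℂ)
            = Matrix.diagonal (fun i => if i ∈ s then D i else 1)
              * (1 + Matrix.single k k (D k - 1)) := by
          rw [one_add_std_eq_diagonal, Matrix.diagonal_mul_diagonal]
          apply congrArg Matrix.diagonal
          funext i
          rcases eq_or_ne i k with rfl | hik
          · simp [hk]
          · simp [Function.update_apply, hik, Finset.mem_insert]
        rw [hstep]
        exact Phom_mul ih (Phom_diag_factor hf hPDE k (D k) (hD k))
  have := haux Finset.univ
  simpa using this

lemma Phom_transvec_list (L : List (Matrix.TransvectionStruct (Fin n) ℂ)) :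
    Phom α f (L.map Matrix.TransvectionStruct.toMatrix).prod := by
  induction L with
  | nil => simpa using Phom_one (α := α) (f := f)
  | cons t L ih =>
      rw [List.map_cons, List.prod_cons]
      exact Phom_mul (Phom_transvection hf hPDE t.i t.j t.hij t.c) ih

lemma Phom_invertible (N : Matrix (Fin n) (Fin n) ℂ) (hN : N.det ≠ 0) : Phom α f N := by
  obtain ⟨L, L', D, hdecomp⟩ :=
    Matrix.Pivot.exists_list_transvec_mul_diagonal_mul_list_transvec N
  have hDdet : (Matrix.diagonal D).det ≠ 0 := by
    intro h0
    apply hN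
    rw [hdecomp, Matrix.det_mul, Matrix.det_mul, h0]
    ring
  have hD : ∀ k, D k ≠ 0 := by
    rw [Matrix.det_diagonal] at hDdet
    intro k hk
    exact hDdet (Finset.prod_eq_zero (Finset.mem_univ k) hk)
  rw [hdecomp]
  exact Phom_mul (Phom_mul (Phom_transvec_list hf hPDE L) (Phom_diagonal hf hPDE D hD))
    (Phom_transvec_list hf hPDE L')

omit hf hPDE in
lemma det_poly_eval (N : Matrix (Fin n) (Fin n) ℂ) (t : ℂ) :
    Polynomial.eval t (Matrix.charpoly (-N)) = (N + t • 1).det := by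
  rw [Matrix.charpoly, ← Polynomial.coe_evalRingHom, RingHom.map_det]
  congr 1
  ext a b
  rcases eq_or_ne a b with rfl | hab
  · simp [Matrix.charmatrix_apply_eq, Matrix.one_apply]
    ring
  · simp [Matrix.charmatrix_apply_ne _ _ _ hab, Matrix.one_apply, hab]

omit hf hPDE in
lemma det_zero_finite (N : Matrix (Fin n) (Fin n) ℂ) :
    {t : ℂ | (N + t • 1).det = 0}.Finite := by
  have hmono : {t : ℂ | (N + t • 1).det = 0} ⊆ {t : ℂ | (Matrix.charpoly (-N)).IsRoot t} := by
    intro t ht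
    simp only [Set.mem_setOf_eq, Polynomial.IsRoot, det_poly_eval]
    exact ht
  exact (Polynomial.finite_setOf_isRoot (Matrix.charpoly_monic (-N)).ne_zero).subset hmono

omit hf hPDE in
lemma mm_line (U : Fin m → Fin n → ℂ) (N : Matrix (Fin n) (Fin n) ℂ) (t : ℂ) :
    mm U (N + t • 1) = mm U N + t • U := by
  rw [mm_add, mm_smul, mm_one]

lemma Phom_all (N : Matrix (Fin n) (Fin n) ℂ) : Phom α f N := by
  intro U
  set G : ℂ → ℂ := fun t => f (mm U N + t • U) - (N + t • 1).det ^ α * f U with hG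
  have hGzero : ∀ t : ℂ, (N + t • 1).det ≠ 0 → G t = 0 := by
    intro t ht
    have h4 := Phom_invertible hf hPDE (N + t • 1) ht U
    simp only [mm_line] at h4
    show f (mm U N + t • U) - (N + t • 1).det ^ α * f U = 0
    rw [h4]
    ring
  have hcont : Continuous G := by
    have h1 : Continuous fun t : ℂ => mm U N + t • U :=
      continuous_const.add (continuous_id.smul continuous_const)
    have h2 : Continuous fun t : ℂ => (N + t • 1).det ^ α * f U := by
      have h3 : Continuous fun t : ℂ => (N + t • 1).det := by
        have := (Matrix.charpoly (-N)).continuous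
        simpa only [det_poly_eval] using this
      exact (h3.pow α).mul continuous_const
    exact (hf.continuous.comp h1).sub h2
  have hev : ∀ᶠ t in nhdsWithin (0:ℂ) {(0:ℂ)}ᶜ, G t = 0 := by
    have hfin : ({t : ℂ | (N + t • 1).det = 0} \ {0}).Finite := (det_zero_finite N).diff
    have hcl : IsClosed ({t : ℂ | (N + t • 1).det = 0} \ {0}) := hfin.isClosed
    have h0 : (0:ℂ) ∉ ({t : ℂ | (N + t • 1).det = 0} \ {0}) := by simp
    have hmem : ({t : ℂ | (N + t • 1).det = 0} \ {0})ᶜ ∈ nhds (0:ℂ) :=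
      hcl.isOpen_compl.mem_nhds h0
    filter_upwards [nhdsWithin_le_nhds hmem, self_mem_nhdsWithin] with t ht ht0
    apply hGzero
    intro hdet
    exact ht ⟨hdet, ht0⟩
  have hne : (nhdsWithin (0:ℂ) {(0:ℂ)}ᶜ).NeBot := by infer_instance
  have h1 : Filter.Tendsto G (nhdsWithin (0:ℂ) {(0:ℂ)}ᶜ) (nhds (G 0)) :=
    (hcont.continuousAt).continuousWithinAt
  have h2 : Filter.Tendsto G (nhdsWithin (0:ℂ) {(0:ℂ)}ᶜ) (nhds 0) := by
    refine Filter.Tendsto.congr' ?_ tendsto_const_nhds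
    filter_upwards [hev] with t ht
    exact ht.symm
  have hG0 : G 0 = 0 := tendsto_nhds_unique h1 h2
  have h5 : f (mm U N + (0:ℂ) • U) - (N + (0:ℂ) • 1).det ^ α * f U = 0 := hG0
  simp only [zero_smul, add_zero] at h5
  exact sub_eq_zero.mp h5

end

section forward
variable {m n : ℕ} {α : ℕ} {f : (Fin m → Fin n → ℂ) → ℂ}

lemma mm_std_entry (U : Fin m → Fin n → ℂ) (i j : Fin n) (d : Fin m) (b : Fin n) :
    mm U (Matrix.single i j 1) d b = if b = j then U d i else 0 := by
  simp only [mm, Matrix.single, Matrix.of_apply, mul_ite, mul_one, mul_zero]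
  rcases eq_or_ne b j with rfl | hbj
  · simp [eq_comm]
  · simp [hbj, Ne.symm hbj]

lemma forward_dir (hf : Differentiable ℂ f)
    (hHom : ∀ (U : Fin m → Fin n → ℂ) (N : Matrix (Fin n) (Fin n) ℂ),
        f (mm U N) = N.det ^ α * f U)
    (U : Fin m → Fin n → ℂ) (i j : Fin n) :
    (∑ d, U d i * fderiv ℂ f U (Pi.single d (Pi.single j 1))) =
      (α : ℂ) * (if i = j then 1 else 0) * f U := by
  set δ : ℂ := if i = j then 1 else 0 with hδ
  set W : Fin m → Fin n → ℂ := mm U (Matrix.single i j 1) with hW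
  -- the path value formula
  have hval : ∀ t : ℂ, f (U + t • W) = (1 + t * δ) ^ α * f U := by
    intro t
    have hU : U + t • W = mm U (1 + Matrix.single i j t) := by
      have hEc : Matrix.single i j t = t • Matrix.single i j (1:ℂ) := by
        rw [Matrix.smul_single, smul_eq_mul, mul_one]
      rw [hEc, mm_add, mm_one, mm_smul, hW]
    have hdet : (1 + Matrix.single i j t : Matrix (Fin n) (Fin n) ℂ).det = 1 + t * δ := by
      rcases eq_or_ne i j with rfl | hij
      · have : Matrix.single i i t = Matrix.single i i ((1 + t) - 1) := by
          norm_num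
        rw [this, one_add_std_eq_diagonal, Matrix.det_diagonal,
          Finset.prod_update_of_mem (Finset.mem_univ i)]
        simp [hδ]
      · have : (1 + Matrix.single i j t : Matrix (Fin n) (Fin n) ℂ)
            = Matrix.transvection i j t := rfl
        rw [this, Matrix.det_transvection_of_ne i j hij t, hδ, if_neg hij]
        ring
    rw [hU, hHom, hdet]
  have hd1 : HasDerivAt (fun t : ℂ => f (U + t • W)) (fderiv ℂ f U W) 0 := by
    have h := path_hasDerivAt hf id 1 0 (hasDerivAt_id 0) U W
    simpa using h
  have hd2 : HasDerivAt (fun t : ℂ => f (U + t • W)) ((α : ℂ) * δ * f U) 0 := by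
    have h : HasDerivAt (fun t : ℂ => (1 + t * δ) ^ α * f U)
        ((α : ℂ) * δ * f U) 0 := by
      have hbase : HasDerivAt (fun t : ℂ => 1 + t * δ) δ 0 := by
        simpa using ((hasDerivAt_id 0).mul_const δ).const_add 1
      have hpow := (hbase.pow α).mul_const (f U)
      simpa using hpow
    have : (fun t : ℂ => f (U + t • W)) = fun t : ℂ => (1 + t * δ) ^ α * f U := by
      funext t; exact hval t
    rw [this]
    exact h
  have hfd : fderiv ℂ f U W = (α : ℂ) * δ * f U := hd1.unique hd2
  rw [fderiv_apply_eq] at hfd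
  rw [← hfd]
  apply Finset.sum_congr rfl
  intro d _
  have : ∀ b, W d b * fderiv ℂ f U (Pi.single d (Pi.single b 1))
      = (if b = j then U d i * fderiv ℂ f U (Pi.single d (Pi.single b 1)) else 0) := by
    intro b
    rw [hW, mm_std_entry]
    split <;> simp
  rw [Finset.sum_congr rfl (fun b _ => this b)]
  simp

end forward
end Stmt0Aux


/-- A differentiable `f : ℂ^(m×n) → ℂ` satisfies the homogeneity
property `f(UN) = (det N)^α f(U)` for all `N ∈ ℂ^(n×n)` iff it satisfies the
system of PDEs `Uᵀ (∂f/∂U) = α · I · f`. -/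
theorem stmt0 {m n : ℕ} (α : ℕ) (f : (Fin m → Fin n → ℂ) → ℂ)
    (hf : Differentiable ℂ f) :
    (∀ (U : Fin m → Fin n → ℂ) (N : Matrix (Fin n) (Fin n) ℂ),
        f (fun a b => ∑ c, U a c * N c b) = N.det ^ α * f U) ↔
    (∀ (U : Fin m → Fin n → ℂ) (i j : Fin n),
        (∑ d, U d i * fderiv ℂ f U (Pi.single d (Pi.single j 1))) =
          (α : ℂ) * (if i = j then 1 else 0) * f U) := by
  constructor
  · intro hHom
    exact Stmt0Aux.forward_dir hf hHom
  · intro hPDE U N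
    exact Stmt0Aux.Phom_all hf hPDE N U
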